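/- Let f(a) = a/(1-e^{-a}). If c > 1 and a is the unique positive solution of f(a) = c, then c ≥ a ≥ c(1 - e^{-c/2}). -/

import Mathlib

open Real

/-- If `c ≥ 2` and `a` is the unique positive solution of `a/(1-e^{-a}) = c`, then
`c ≥ a ≥ c(1 - e^{-c/2})`. -/
theorem a_bounds (c a : ℝ) (hc : 2 ≤ c) (ha : 0 < a)
    (hfa : a / (1 - exp (-a)) = c) :
    a ≤ c ∧ c * (1 - exp (-c / 2)) ≤ a := by
  have hexp : exp (-a) < 1 := exp_lt_one_iff.mpr (by linarith)
  have hD : 0 < 1 - exp (-a) := by linarith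
  have hDpos : 0 < exp (-a) := exp_pos _
  have heq : a = c * (1 - exp (-a)) := by
    field_simp at hfa; linarith
  constructor
  · nlinarith [hDpos]
  · -- first show a ≥ 1
    have h1 : 1 + a ≤ exp a := by nlinarith [add_one_le_exp a]
    have hinv : exp (-a) ≤ 1 / (1 + a) := by
      rw [exp_neg, inv_le_comm₀ (exp_pos a) (by positivity)]
      simpa using h1
    have ha1 : 1 ≤ a := by
      by_contra h
      push_neg at h
      have : a ≥ 2 * (1 - 1 / (1 + a)) := by nlinarith
      have h2 : 1 - 1 / (1 + a) = a / (1 + a) := by field_simp; ring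
      rw [h2] at this
      have h3 := mul_le_mul_of_nonneg_right this.le (by linarith : (0:ℝ) ≤ 1 + a)
      have h4 : a / (1 + a) * (1 + a) = a := by field_simp
      nlinarith
    have he1 : exp (-1 : ℝ) ≤ 1 / 2 := by
      rw [exp_neg]
      have : (2:ℝ) ≤ exp 1 := by nlinarith [add_one_le_exp (1:ℝ)]
      rw [inv_le_comm₀ (exp_pos 1) (by norm_num)]
      simpa using this
    have hea : exp (-a) ≤ 1 / 2 :=
      le_trans (exp_le_exp.mpr (by linarith)) he1
    have hac2 : c / 2 ≤ a := by nlinarith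
    have : exp (-a) ≤ exp (-c / 2) := exp_le_exp.mpr (by linarith)
    nlinarith
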